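/- Let X and Y be complex Banach spaces, A : X → Y and B, C : Y → X bounded linear operators satisfying A(BA)² = ABACA = ACABA = (AC)²A, suppose AC has the single valued extension property, and let F be a closed subset of ℂ with 0 ∉ F. If the local spectral subspace Y_{AC}(F ∪ {0}) is closed in Y, then the local spectral subspace X_{BA}(F) is closed in X. -/

import Mathlib

open ContinuousLinearMap Filter Topology Set

/-- `T` has the single valued extension property at `lam`. -/
def HasSVEPAt {E : Type*} [NormedAddCommGroup E] [NormedSpace ℂ E]
    (T : E →L[ℂ] E) (lam : ℂ) : Prop :=
  ∃ r > (0 : ℝ), ∀ U : Set ℂ, U ⊆ Metric.ball lam r → IsOpen U →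
    ∀ f : ℂ → E, AnalyticOnNhd ℂ f U →
      (∀ mu ∈ U, T (f mu) - mu • f mu = 0) → ∀ mu ∈ U, f mu = 0

/-- `T` has the single valued extension property. -/
def HasSVEP {E : Type*} [NormedAddCommGroup E] [NormedSpace ℂ E]
    (T : E →L[ℂ] E) : Prop :=
  ∀ lam : ℂ, HasSVEPAt T lam

/-- The local spectrum `σ_T(x)`. -/
def localSpectrum {E : Type*} [NormedAddCommGroup E] [NormedSpace ℂ E]
    (T : E →L[ℂ] E) (x : E) : Set ℂ :=
  {lam | ¬ ∃ U : Set ℂ, IsOpen U ∧ lam ∈ U ∧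
    ∃ f : ℂ → E, AnalyticOnNhd ℂ f U ∧ ∀ mu ∈ U, T (f mu) - mu • f mu = x}

/-- The local spectral subspace `X_T(F) = {x : σ_T(x) ⊆ F}`. -/
def localSubspace {E : Type*} [NormedAddCommGroup E] [NormedSpace ℂ E]
    (T : E →L[ℂ] E) (F : Set ℂ) : Set E :=
  {x | localSpectrum T x ⊆ F}

namespace StmtNine

variable {E : Type*} [NormedAddCommGroup E] [NormedSpace ℂ E] [CompleteSpace E]

theorem locRes_iff {T : E →L[ℂ] E} {x : E} {lam : ℂ} :
    lam ∉ localSpectrum T x ↔ ∃ U : Set ℂ, IsOpen U ∧ lam ∈ U ∧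
      ∃ f : ℂ → E, DifferentiableOn ℂ f U ∧ ∀ mu ∈ U, T (f mu) - mu • f mu = x := by
  unfold localSpectrum
  simp only [mem_setOf_eq, not_not]
  constructor
  · rintro ⟨U, hU, hl, f, hf, he⟩
    exact ⟨U, hU, hl, f, hf.differentiableOn, he⟩
  · rintro ⟨U, hU, hl, f, hf, he⟩
    exact ⟨U, hU, hl, f, hf.analyticOnNhd hU, he⟩

theorem locSpec_zero (T : E →L[ℂ] E) (lam : ℂ) : lam ∉ localSpectrum T (0 : E) :=
  locRes_iff.mpr ⟨univ, isOpen_univ, mem_univ _, fun _ => 0, differentiableOn_const 0,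
    fun _ _ => by simp⟩

theorem locSpec_add {T : E →L[ℂ] E} {x y : E} :
    localSpectrum T (x + y) ⊆ localSpectrum T x ∪ localSpectrum T y := by
  intro lam hlam
  by_contra hc
  simp only [mem_union] at hc
  push_neg at hc
  obtain ⟨U, hU, hlU, f, hf, he⟩ := locRes_iff.mp hc.1
  obtain ⟨V, hV, hlV, g, hg, hge⟩ := locRes_iff.mp hc.2
  refine locRes_iff.mpr ⟨U ∩ V, hU.inter hV, ⟨hlU, hlV⟩, fun μ => f μ + g μ,
    (hf.mono inter_subset_left).add (hg.mono inter_subset_right), fun μ hμ => ?_⟩ hlam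
  have h1 := he μ hμ.1
  have h2 := hge μ hμ.2
  rw [map_add, smul_add]
  rw [show T (f μ) + T (g μ) - (μ • f μ + μ • g μ)
      = (T (f μ) - μ • f μ) + (T (g μ) - μ • g μ) by abel, h1, h2]

theorem locSpec_smul (T : E →L[ℂ] E) (c : ℂ) (x : E) :
    localSpectrum T (c • x) ⊆ localSpectrum T x := by
  intro lam hlam
  by_contra hc
  obtain ⟨U, hU, hlU, f, hf, he⟩ := locRes_iff.mp hc
  refine locRes_iff.mpr ⟨U, hU, hlU, fun μ => c • f μ, hf.const_smul c, fun μ hμ => ?_⟩ hlam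
  rw [map_smul, smul_comm μ c, ← smul_sub, he μ hμ]

theorem locSpec_apply (T : E →L[ℂ] E) (x : E) :
    localSpectrum T (T x) ⊆ localSpectrum T x := by
  intro lam hlam
  by_contra hc
  obtain ⟨U, hU, hlU, f, hf, he⟩ := locRes_iff.mp hc
  refine locRes_iff.mpr ⟨U, hU, hlU, fun μ => T (f μ),
    T.differentiable.comp_differentiableOn hf, fun μ hμ => ?_⟩ hlam
  rw [← map_smul, ← map_sub, he μ hμ]

theorem div_lemma (T : E →L[ℂ] E) (x : E) {lam : ℂ} (h0 : lam ≠ 0)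
    (h : lam ∉ localSpectrum T (T x)) : lam ∉ localSpectrum T x := by
  obtain ⟨U, hU, hlU, f, hf, he⟩ := locRes_iff.mp h
  refine locRes_iff.mpr ⟨U \ {0}, hU.sdiff isClosed_singleton, ⟨hlU, h0⟩,
    fun μ => μ⁻¹ • (f μ - x), ?_, fun μ hμ => ?_⟩
  · exact (differentiableOn_inv.mono (fun μ hμ => hμ.2)).smul
      ((hf.mono diff_subset).sub (differentiableOn_const x))
  · have hμ0 : μ ≠ 0 := hμ.2
    have h1 := he μ hμ.1
    have h2 : T (f μ) = T x + μ • f μ := by rw [← h1]; abel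
    rw [map_smul, map_sub, h2, add_sub_cancel_left, smul_smul, smul_smul,
      inv_mul_cancel₀ hμ0, mul_inv_cancel₀ hμ0, one_smul, one_smul, sub_sub_cancel]

theorem eig_lemma (T : E →L[ℂ] E) {w : E} {lam : ℂ} (h : T w = lam • w) :
    localSpectrum T w ⊆ {lam} := by
  intro ν hν
  by_contra hc
  have hc' : ν ≠ lam := hc
  refine locRes_iff.mpr ⟨{lam}ᶜ, isOpen_compl_singleton, hc', fun μ => (lam - μ)⁻¹ • w,
    ?_, fun μ hμ => ?_⟩ hν
  · apply DifferentiableOn.smul _ (differentiableOn_const w)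
    apply DifferentiableOn.inv ((differentiableOn_const lam).sub differentiableOn_id)
    intro μ hμ
    rw [Pi.sub_apply, sub_ne_zero]
    exact fun hh => hμ hh.symm
  · have hne : lam - μ ≠ 0 := sub_ne_zero.mpr (fun hh => hμ hh.symm)
    show T ((lam - μ)⁻¹ • w) - μ • ((lam - μ)⁻¹ • w) = w
    rw [map_smul, h, smul_smul, smul_smul, ← sub_smul,
      show (lam - μ)⁻¹ * lam - μ * (lam - μ)⁻¹ = 1 by field_simp, one_smul]

theorem eq_on_punctured {f : ℂ → E} {U : Set ℂ} {lam : ℂ} (hU : IsOpen U) (hl : lam ∈ U)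
    (hc : ContinuousOn f U) (hz : ∀ μ ∈ U, μ ≠ lam → f μ = 0) : f lam = 0 := by
  have hkey : 𝓝[U \ {lam}] lam = 𝓝[{lam}ᶜ] lam := by
    rw [diff_eq, inter_comm, ← nhdsWithin_restrict' _ (hU.mem_nhds hl)]
  have hne : (𝓝[U \ {lam}] lam).NeBot := by
    rw [hkey]; exact NormedField.nhdsNE_neBot lam
  have h1 : Tendsto f (𝓝[U \ {lam}] lam) (𝓝 (f lam)) :=
    (hc lam hl).mono_left (nhdsWithin_mono _ diff_subset)
  have h2 : Tendsto f (𝓝[U \ {lam}] lam) (𝓝 0) := by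
    apply Tendsto.congr' _ tendsto_const_nhds
    filter_upwards [self_mem_nhdsWithin] with μ hμ
    exact (hz μ hμ.1 hμ.2).symm
  exact tendsto_nhds_unique h1 h2

theorem slope_sol (T : E →L[ℂ] E) {x w v : E} {μ lam : ℂ} (hne : μ ≠ lam)
    (hT1 : T w - μ • w = x) (hT2 : T v - lam • v = x) :
    T ((μ - lam)⁻¹ • (w - v)) - μ • ((μ - lam)⁻¹ • (w - v)) = v := by
  have hne' : μ - lam ≠ 0 := sub_ne_zero.mpr hne
  have h1 : T w = x + μ • w := by rw [← hT1]; abel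
  have h2 : T v = x + lam • v := by rw [← hT2]; abel
  rw [map_smul, map_sub, h1, h2,
    show x + μ • w - (x + lam • v) = μ • (w - v) + (μ - lam) • v by
      rw [smul_sub, sub_smul]; abel,
    smul_add, smul_smul, smul_smul, smul_smul, inv_mul_cancel₀ hne', one_smul,
    mul_comm μ (μ - lam)⁻¹]
  abel

theorem value_lemma (T : E →L[ℂ] E) (x : E) {U : Set ℂ} {f : ℂ → E} {lam : ℂ}
    (hU : IsOpen U) (hl : lam ∈ U) (hf : DifferentiableOn ℂ f U)
    (he : ∀ μ ∈ U, T (f μ) - μ • f μ = x) :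
    localSpectrum T (f lam) ⊆ localSpectrum T x := by
  intro ν hν
  by_contra hc
  by_cases hcase : ν = lam
  · obtain rfl := hcase
    have hk : DifferentiableOn ℂ (dslope f ν) U :=
      (Complex.differentiableOn_dslope (hU.mem_nhds hl)).mpr hf
    have hgen : ∀ μ' ∈ U, μ' ≠ ν → T (dslope f ν μ') - μ' • dslope f ν μ' = f ν := by
      intro μ' hμ' hne
      rw [dslope_of_ne f hne, slope_def_module]
      exact slope_sol T hne (he μ' hμ') (he ν hl)
    refine locRes_iff.mpr ⟨U, hU, hl, dslope f ν, hk, fun μ hμ => ?_⟩ hν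
    by_cases hμν : μ = ν
    · obtain rfl := hμν
      have hcont : ContinuousOn (fun μ' => T (dslope f μ μ') - μ' • dslope f μ μ' - f μ) U := by
        apply ContinuousOn.sub _ continuousOn_const
        exact (T.continuous.comp_continuousOn hk.continuousOn).sub
          (continuousOn_id.smul hk.continuousOn)
      have := eq_on_punctured hU hl hcont (fun μ' hμ' hne => by
        rw [hgen μ' hμ' hne, sub_self])
      exact sub_eq_zero.mp this
    · exact hgen μ hμ hμν
  · obtain ⟨V, hV, hνV, g, hg, hge⟩ := locRes_iff.mp hc
    refine locRes_iff.mpr ⟨V ∩ {lam}ᶜ, hV.inter isOpen_compl_singleton, ⟨hνV, hcase⟩,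
      fun μ => (μ - lam)⁻¹ • (g μ - f lam), ?_, fun μ hμ => ?_⟩ hν
    · apply DifferentiableOn.smul
      · apply DifferentiableOn.inv (differentiableOn_id.sub (differentiableOn_const lam))
        intro μ hμ
        exact sub_ne_zero.mpr hμ.2
      · exact (hg.mono inter_subset_left).sub (differentiableOn_const (f lam))
    · exact slope_sol T hμ.2 (hge μ hμ.1) (he lam hl)

theorem svep_unique {T : E →L[ℂ] E} (h : HasSVEP T) {U : Set ℂ} (hU : IsOpen U) {f : ℂ → E}
    (hf : DifferentiableOn ℂ f U) (he : ∀ μ ∈ U, T (f μ) - μ • f μ = 0) :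
    ∀ μ ∈ U, f μ = 0 := by
  intro μ0 hμ0
  obtain ⟨r, hr, hP⟩ := h μ0
  have hU' : IsOpen (U ∩ Metric.ball μ0 r) := hU.inter Metric.isOpen_ball
  exact hP _ inter_subset_right hU' f ((hf.mono inter_subset_left).analyticOnNhd hU')
    (fun μ hμ => he μ hμ.1) μ0 ⟨hμ0, Metric.mem_ball_self hr⟩

theorem glue {T : E →L[ℂ] E} (h : HasSVEP T) {V : Set ℂ} (hV : IsOpen V) {x : E}
    (hx : ∀ lam ∈ V, lam ∉ localSpectrum T x) :
    ∃ f : ℂ → E, DifferentiableOn ℂ f V ∧ ∀ μ ∈ V, T (f μ) - μ • f μ = x := by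
  have H : ∀ lam ∈ V, ∃ U : Set ℂ, (IsOpen U ∧ lam ∈ U) ∧ ∃ g : ℂ → E,
      DifferentiableOn ℂ g U ∧ ∀ μ ∈ U, T (g μ) - μ • g μ = x := by
    intro lam hlam
    obtain ⟨U, hU1, hU2, g, hg1, hg2⟩ := locRes_iff.mp (hx lam hlam)
    exact ⟨U, ⟨hU1, hU2⟩, g, hg1, hg2⟩
  choose! U hU g hg hge using H
  classical
  refine ⟨fun μ => if hμ : μ ∈ V then g μ μ else 0, ?_, ?_⟩
  · intro lam hlam
    have hWopen : IsOpen (U lam ∩ V) := (hU lam hlam).1.inter hV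
    have hmem : lam ∈ U lam ∩ V := ⟨(hU lam hlam).2, hlam⟩
    have heq : ∀ μ ∈ U lam ∩ V, (if hμ : μ ∈ V then g μ μ else 0) = g lam μ := by
      intro μ hμ
      rw [dif_pos hμ.2]
      have hW2 : IsOpen (U lam ∩ U μ) := (hU lam hlam).1.inter (hU μ hμ.2).1
      have hd : ∀ ν ∈ U lam ∩ U μ, T (g μ ν - g lam ν) - ν • (g μ ν - g lam ν) = 0 := by
        intro ν hν
        rw [map_sub, smul_sub,
          show T (g μ ν) - T (g lam ν) - (ν • g μ ν - ν • g lam ν)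
            = (T (g μ ν) - ν • g μ ν) - (T (g lam ν) - ν • g lam ν) by abel,
          hge μ hμ.2 ν hν.2, hge lam hlam ν hν.1, sub_self]
      have := svep_unique h hW2
        (((hg μ hμ.2).mono inter_subset_right).sub ((hg lam hlam).mono inter_subset_left))
        hd μ ⟨hμ.1, (hU μ hμ.2).2⟩
      rw [Pi.sub_apply, sub_eq_zero] at this
      exact this
    have hda : DifferentiableAt ℂ (g lam) lam :=
      ((hg lam hlam).mono inter_subset_left).differentiableAt (hWopen.mem_nhds hmem)
    have hfeq : (fun μ => if hμ : μ ∈ V then g μ μ else 0) =ᶠ[𝓝 lam] g lam :=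
      Filter.eventuallyEq_of_mem (hWopen.mem_nhds hmem) heq
    exact (hda.congr_of_eventuallyEq hfeq).differentiableWithinAt
  · intro μ hμ
    show T (if hμ : μ ∈ V then g μ μ else 0) - μ • (if hμ : μ ∈ V then g μ μ else 0) = x
    rw [dif_pos hμ]
    exact hge μ hμ μ (hU μ hμ).2

theorem empty_spec {T : E →L[ℂ] E} (h : HasSVEP T) {x : E}
    (hx : localSpectrum T x = ∅) : x = 0 := by
  obtain ⟨f, hfd, hfe⟩ := glue h isOpen_univ (fun lam _ => by rw [hx]; exact notMem_empty lam)
  have hdiff : Differentiable ℂ f := differentiableOn_univ.mp hfd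
  have houter : ∀ lam : ℂ, ‖T‖ + 1 ≤ ‖lam‖ → ‖f lam‖ ≤ ‖x‖ := by
    intro lam hlam
    have he := hfe lam trivial
    have hsub : lam • f lam = T (f lam) - x := by rw [← he]; abel
    have hb : ‖lam‖ * ‖f lam‖ ≤ ‖T‖ * ‖f lam‖ + ‖x‖ := by
      calc ‖lam‖ * ‖f lam‖ = ‖lam • f lam‖ := (norm_smul lam (f lam)).symm
        _ ≤ ‖T (f lam)‖ + ‖x‖ := by rw [hsub]; exact norm_sub_le _ _
        _ ≤ ‖T‖ * ‖f lam‖ + ‖x‖ := by gcongr; exact T.le_opNorm _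
    nlinarith [norm_nonneg (f lam), norm_nonneg x, norm_nonneg T]
  obtain ⟨Cb, hCb⟩ := (isCompact_closedBall (0:ℂ) (‖T‖+1)).exists_bound_of_continuousOn
    hdiff.continuous.continuousOn
  have hb : Bornology.IsBounded (range f) := by
    rw [isBounded_iff_forall_norm_le]
    refine ⟨max Cb ‖x‖, ?_⟩
    rintro _ ⟨lam, rfl⟩
    rcases le_or_gt ‖lam‖ (‖T‖+1) with hle | hlt
    · exact le_trans (hCb lam (by simpa [Metric.mem_closedBall] using hle)) (le_max_left _ _)
    · exact le_trans (houter lam hlt.le) (le_max_right _ _)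
  obtain ⟨c, hc⟩ := hdiff.exists_const_forall_eq_of_bounded hb
  have h0' := hfe 0 trivial
  have h1' := hfe 1 trivial
  rw [hc 0] at h0'
  rw [hc 1] at h1'
  have hc0 : c = 0 := by
    have hdiff2 : T c - (0:ℂ) • c - (T c - (1:ℂ) • c) = 0 := by rw [h0', h1', sub_self]
    rw [zero_smul, one_smul] at hdiff2
    simpa using hdiff2
  rw [hc0] at h0'
  simpa using h0'.symm

def locSubmodule (T : E →L[ℂ] E) (G : Set ℂ) : Submodule ℂ E where
  carrier := localSubspace T G
  zero_mem' := fun lam hlam => absurd hlam (locSpec_zero T lam)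
  add_mem' := fun {a b} ha hb lam hlam => by
    rcases locSpec_add hlam with h | h
    exacts [ha h, hb h]
  smul_mem' := fun c x hx lam hlam => hx (locSpec_smul T c x hlam)

section Transfer

variable {X Y : Type*} [NormedAddCommGroup X] [NormedSpace ℂ X] [CompleteSpace X]
  [NormedAddCommGroup Y] [NormedSpace ℂ Y] [CompleteSpace Y]
  (A : X →L[ℂ] Y) (B C : Y →L[ℂ] X)

theorem key_a (h3 : A ∘L C ∘L A ∘L B ∘L A = A ∘L C ∘L A ∘L C ∘L A)
    {x : X} {v : X} {μ : ℂ} (hμ0 : μ ≠ 0) (he : (B ∘L A) v - μ • v = x) :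
    (A ∘L C) (A v - μ⁻¹ • ((A ∘L B - A ∘L C) (A v)))
      - μ • (A v - μ⁻¹ • ((A ∘L B - A ∘L C) (A v))) = A x := by
  have hq : (A ∘L C) ((A ∘L B - A ∘L C) (A v)) = 0 := by
    have hk := DFunLike.congr_fun h3 v
    simp only [comp_apply] at hk
    simp only [sub_apply, comp_apply, map_sub]
    rw [hk, sub_self]
  rw [map_sub, map_smul, hq, smul_zero, sub_zero, smul_sub, smul_smul,
    mul_inv_cancel₀ hμ0, one_smul, sub_apply]
  have habel : (A ∘L C) (A v) - (μ • A v - ((A ∘L B) (A v) - (A ∘L C) (A v)))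
      = (A ∘L B) (A v) - μ • A v := by abel
  rw [habel]
  have hAB : (A ∘L B) (A v) = A ((B ∘L A) v) := by simp only [comp_apply]
  rw [hAB, ← map_smul, ← map_sub, he]

theorem transfer_a (h3 : A ∘L C ∘L A ∘L B ∘L A = A ∘L C ∘L A ∘L C ∘L A) (x : X) :
    localSpectrum (A ∘L C) (A x) ⊆ localSpectrum (B ∘L A) x ∪ {0} := by
  intro ν hν
  by_contra hc
  simp only [mem_union, mem_singleton_iff, not_or] at hc
  obtain ⟨hcT, hν0⟩ := hc
  obtain ⟨U, hU, hlU, f, hf, he⟩ := locRes_iff.mp hcT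
  refine locRes_iff.mpr ⟨U \ {0}, hU.sdiff isClosed_singleton, ⟨hlU, hν0⟩,
    fun μ => A (f μ) - μ⁻¹ • ((A ∘L B - A ∘L C) (A (f μ))), ?_, fun μ hμ => ?_⟩ hν
  · have hAf : DifferentiableOn ℂ (fun μ => A (f μ)) (U \ {0}) :=
      A.differentiable.comp_differentiableOn (hf.mono diff_subset)
    exact hAf.sub ((differentiableOn_inv.mono (fun μ hμ => hμ.2)).smul
      ((A ∘L B - A ∘L C).differentiable.comp_differentiableOn hAf))
  · exact key_a A B C h3 hμ.2 (he μ hμ.1)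

theorem transfer_b (h1 : A ∘L B ∘L A ∘L B ∘L A = A ∘L B ∘L A ∘L C ∘L A) (x : X) {ν : ℂ}
    (hν0 : ν ≠ 0) (h : ν ∉ localSpectrum (A ∘L C) (A x)) :
    ν ∉ localSpectrum (B ∘L A) x := by
  apply div_lemma _ _ hν0
  apply div_lemma _ _ hν0
  obtain ⟨U, hU, hlU, g, hg, hge⟩ := locRes_iff.mp h
  refine locRes_iff.mpr ⟨U \ {0}, hU.sdiff isClosed_singleton, ⟨hlU, hν0⟩,
    fun μ => B ((A ∘L B) (g μ)), ?_, fun μ hμ => ?_⟩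
  · exact (B.differentiable.comp (A ∘L B).differentiable).comp_differentiableOn
      (hg.mono diff_subset)
  · have hμ0 : (μ:ℂ) ≠ 0 := hμ.2
    have heμ := hge μ hμ.1
    simp only [comp_apply] at heμ ⊢
    have hsub : μ • g μ = A (C (g μ)) - A x := by rw [← heμ]; abel
    have hz : A (μ⁻¹ • (C (g μ) - x)) = g μ := by
      rw [map_smul, map_sub, ← hsub, smul_smul, inv_mul_cancel₀ hμ0, one_smul]
    have hkey := DFunLike.congr_fun h1 (μ⁻¹ • (C (g μ) - x))
    simp only [comp_apply] at hkey
    rw [hz] at hkey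
    have e1 : μ • B (A (B (g μ))) = B (A (B (A (C (g μ))))) - B (A (B (A x))) := by
      rw [← map_smul, ← map_smul, ← map_smul, hsub, map_sub, map_sub, map_sub]
    rw [e1, hkey]
    abel

theorem svep_transfer (h1 : A ∘L B ∘L A ∘L B ∘L A = A ∘L B ∘L A ∘L C ∘L A)
    (h3 : A ∘L C ∘L A ∘L B ∘L A = A ∘L C ∘L A ∘L C ∘L A)
    (hs : HasSVEP (A ∘L C)) : HasSVEP (B ∘L A) := by
  intro lam
  obtain ⟨r, hr, hP⟩ := hs lam
  refine ⟨r, hr, ?_⟩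
  intro U hUball hUopen f hfan hfe
  have hf : DifferentiableOn ℂ f U := hfan.differentiableOn
  have hU'open : IsOpen (U \ {0}) := hUopen.sdiff isClosed_singleton
  set g : ℂ → Y := fun μ => A (f μ) - μ⁻¹ • ((A ∘L B - A ∘L C) (A (f μ))) with hgdef
  have hgdiff : DifferentiableOn ℂ g (U \ {0}) := by
    have hAf : DifferentiableOn ℂ (fun μ => A (f μ)) (U \ {0}) :=
      A.differentiable.comp_differentiableOn (hf.mono diff_subset)
    exact hAf.sub ((differentiableOn_inv.mono (fun μ hμ => hμ.2)).smul
      ((A ∘L B - A ∘L C).differentiable.comp_differentiableOn hAf))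
  have hge : ∀ μ ∈ U \ {0}, (A ∘L C) (g μ) - μ • g μ = 0 := by
    intro μ hμ
    have hx0 : (B ∘L A) (f μ) - μ • f μ = (0:X) := hfe μ hμ.1
    have := key_a A B C h3 (x := (0:X)) hμ.2 hx0
    rw [map_zero] at this
    exact this
  have hg0 : ∀ μ ∈ U \ {0}, g μ = 0 :=
    hP _ (fun μ hμ => hUball hμ.1) hU'open g (hgdiff.analyticOnNhd hU'open) hge
  have hfzero : ∀ μ ∈ U \ {0}, f μ = 0 := by
    intro μ hμ
    have hμ0 : (μ:ℂ) ≠ 0 := hμ.2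
    have hAf : A (f μ) = μ⁻¹ • (A (B (A (f μ))) - A (C (A (f μ)))) := by
      have hg := hg0 μ hμ
      simp only [hgdef, sub_apply, comp_apply] at hg
      rw [sub_eq_zero] at hg
      exact hg
    have h5 : A (B (A (f μ))) = 0 := by
      have hk := DFunLike.congr_fun h1 (f μ)
      simp only [comp_apply] at hk
      calc A (B (A (f μ))) = A (B (μ⁻¹ • (A (B (A (f μ))) - A (C (A (f μ)))))) := by
            rw [← hAf]
        _ = μ⁻¹ • (A (B (A (B (A (f μ))))) - A (B (A (C (A (f μ)))))) := by
            rw [map_smul, map_smul, map_sub, map_sub]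
        _ = 0 := by rw [hk, sub_self, smul_zero]
    have h7 : (B ∘L A) (f μ) = μ • f μ := by
      have := hfe μ hμ.1
      rwa [sub_eq_zero] at this
    have h6 : μ • (μ • f μ) = 0 := by
      have : (B ∘L A) ((B ∘L A) (f μ)) = 0 := by
        simp only [comp_apply]
        rw [h5, map_zero]
      rw [h7, map_smul, h7] at this
      exact this
    have h8 := (smul_eq_zero.mp h6).resolve_left hμ0
    exact (smul_eq_zero.mp h8).resolve_left hμ0
  intro mu hmu
  by_cases hmu0 : mu = (0:ℂ)
  · subst hmu0
    exact eq_on_punctured hUopen hmu hf.continuousOn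
      (fun μ' h1' h2' => hfzero μ' ⟨h1', h2'⟩)
  · exact hfzero mu ⟨hmu, hmu0⟩

end Transfer

end StmtNine

theorem stmt_9 {X Y : Type*} [NormedAddCommGroup X] [NormedSpace ℂ X] [CompleteSpace X]
    [NormedAddCommGroup Y] [NormedSpace ℂ Y] [CompleteSpace Y]
    (A : X →L[ℂ] Y) (B C : Y →L[ℂ] X)
    (h1 : A ∘L B ∘L A ∘L B ∘L A = A ∘L B ∘L A ∘L C ∘L A)
    (h2 : A ∘L B ∘L A ∘L C ∘L A = A ∘L C ∘L A ∘L B ∘L A)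
    (h3 : A ∘L C ∘L A ∘L B ∘L A = A ∘L C ∘L A ∘L C ∘L A)
    (hsvep : HasSVEP (A ∘L C))
    (F : Set ℂ) (hF : IsClosed F) (h0 : (0 : ℂ) ∉ F)
    (hclosed : IsClosed (localSubspace (A ∘L C) (F ∪ {0}))) :
    IsClosed (localSubspace (B ∘L A) F) := by
  classical
  set T := B ∘L A with hT
  set R := A ∘L C with hR
  set G : Set ℂ := F ∪ {0} with hG
  have h0G : (0:ℂ) ∈ G := Or.inr rfl
  have hFG : F ⊆ G := subset_union_left
  have hsvepT : HasSVEP T := StmtNine.svep_transfer A B C h1 h3 hsvep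
  have hmemG : ∀ x : X, localSpectrum T x ⊆ G ↔ localSpectrum R (A x) ⊆ G := by
    intro x
    constructor
    · intro hx ν hν
      rcases StmtNine.transfer_a A B C h3 x hν with h | h
      · exact hx h
      · exact h ▸ h0G
    · intro hx ν hν
      by_cases hν0 : ν = 0
      · exact hν0 ▸ h0G
      · have : ν ∈ localSpectrum R (A x) := by
          by_contra hc
          exact StmtNine.transfer_b A B C h1 x hν0 hc hν
        exact hx this
  have hMeq : localSubspace T G = A ⁻¹' (localSubspace R G) := by
    ext x
    simp only [localSubspace, mem_setOf_eq, mem_preimage]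
    exact hmemG x
  have hMclosed : IsClosed (localSubspace T G) := by
    rw [hMeq]
    exact hclosed.preimage A.continuous
  rw [← isSeqClosed_iff_isClosed]
  intro xs x hxs hxlim
  have hxG : localSpectrum T x ⊆ G :=
    hMclosed.isSeqClosed (fun n ν hν => hFG (hxs n hν)) hxlim
  obtain ⟨d, hd, hball⟩ := Metric.isOpen_iff.mp hF.isOpen_compl 0 h0
  set rr : ℝ := d/2 with hrr
  have hrrpos : 0 < rr := by positivity
  have hrd : rr < d := by rw [hrr]; linarith
  have hballG : ∀ ν : ℂ, ν ∈ Metric.ball (0:ℂ) d → ν ≠ 0 → ν ∉ G := by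
    intro ν h hn0 hc
    rcases hc with h' | h'
    · exact hball h h'
    · exact hn0 h'
  set M : Submodule ℂ X := StmtNine.locSubmodule T G with hM
  have hMc : IsClosed (M : Set X) := hMclosed
  haveI hMcomplete : CompleteSpace M := hMc.completeSpace_coe
  have hTM : ∀ v : M, T (v : X) ∈ M := fun v ν hν => v.2 (StmtNine.locSpec_apply T _ hν)
  set S : M →L[ℂ] M := (T.comp M.subtypeL).codRestrict M hTM with hS
  have hSapp : ∀ v : M, (S v : X) = T (v : X) := fun v => rfl
  have hunit : ∀ ν : ℂ, ν ∉ G → IsUnit (S - ν • (1 : M →L[ℂ] M)) := by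
    intro ν hνG
    have hker : (S - ν • (1 : M →L[ℂ] M)).ker = ⊥ := by
      rw [LinearMap.ker_eq_bot']
      intro v hv
      have hv' : T (v : X) - ν • (v : X) = 0 := by
        have h := congrArg Subtype.val hv
        simpa [hSapp] using h
      have hTv : T (v : X) = ν • (v : X) := by rwa [sub_eq_zero] at hv'
      have hspec : localSpectrum T (v : X) ⊆ {ν} := StmtNine.eig_lemma T hTv
      have hempty : localSpectrum T (v : X) = ∅ := by
        apply eq_empty_iff_forall_notMem.mpr
        intro μ hμ
        exact hνG (hspec hμ ▸ v.2 hμ)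
      exact Subtype.ext (StmtNine.empty_spec hsvepT hempty)
    have hrange : (S - ν • (1 : M →L[ℂ] M)).range = ⊤ := by
      rw [LinearMap.range_eq_top]
      intro w
      have hνw : ν ∉ localSpectrum T (w : X) := fun hc => hνG (w.2 hc)
      obtain ⟨U, hU, hνU, f, hf, he⟩ := StmtNine.locRes_iff.mp hνw
      have hfνM : f ν ∈ M := fun μ hμ =>
        w.2 (StmtNine.value_lemma T _ hU hνU hf he hμ)
      refine ⟨⟨f ν, hfνM⟩, Subtype.ext ?_⟩
      show T (f ν) - ν • (f ν) = (w : X)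
      exact he ν hνU
    exact ⟨(ContinuousLinearEquiv.ofBijective _ hker hrange).toUnit, rfl⟩
  have hsphere_sub : ∀ ν ∈ Metric.sphere (0:ℂ) rr, ν ∉ G := by
    intro ν hν
    rw [Metric.mem_sphere, dist_zero_right] at hν
    apply hballG ν
    · rw [Metric.mem_ball, dist_zero_right, hν]
      exact hrd
    · intro h'
      rw [h', norm_zero] at hν
      exact hrrpos.ne hν
  have hcont : ContinuousOn
      (fun ν : ℂ => Ring.inverse (S - ν • (1 : M →L[ℂ] M))) (Metric.sphere 0 rr) := by
    intro ν hν
    obtain ⟨u, hu⟩ := hunit ν (hsphere_sub ν hν)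
    have h1c : ContinuousAt (fun ν : ℂ => S - ν • (1 : M →L[ℂ] M)) ν :=
      (continuous_const.sub (continuous_id.smul continuous_const)).continuousAt
    have h2c : ContinuousAt Ring.inverse (S - ν • (1 : M →L[ℂ] M)) := by
      rw [← hu]
      exact NormedRing.inverse_continuousAt (R := M →L[ℂ] M) u
    have h4c : ContinuousAt (fun ν : ℂ => Ring.inverse (S - ν • (1 : M →L[ℂ] M))) ν :=
      ContinuousAt.comp (g := Ring.inverse)
        (f := fun ν : ℂ => S - ν • (1 : M →L[ℂ] M)) h2c h1c
    exact h4c.continuousWithinAt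
  obtain ⟨Cb, hCb'⟩ := (isCompact_sphere (0:ℂ) rr).exists_bound_of_continuousOn
    (f := fun ν : ℂ => Ring.inverse (S - ν • (1 : M →L[ℂ] M))) hcont
  have hglue : ∀ n : ℕ, ∃ gn : ℂ → X, DifferentiableOn ℂ gn (Metric.ball 0 d) ∧
      ∀ μ ∈ Metric.ball (0:ℂ) d, T (gn μ) - μ • gn μ = xs n := by
    intro n
    apply StmtNine.glue hsvepT Metric.isOpen_ball
    intro ν hν hc
    exact hball hν (hxs n hc)
  choose gg hgdiff hgeq using hglue
  have hgM : ∀ n, ∀ μ ∈ Metric.ball (0:ℂ) d, gg n μ ∈ M := by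
    intro n μ hμ ν hν
    exact hFG (hxs n (StmtNine.value_lemma T _ Metric.isOpen_ball hμ (hgdiff n) (hgeq n) hν))
  have hxsM : ∀ n, xs n ∈ M := fun n ν hν => hFG (hxs n hν)
  have hbound : ∀ n m, ∀ μ ∈ Metric.closedBall (0:ℂ) rr,
      ‖gg n μ - gg m μ‖ ≤ Cb * ‖xs n - xs m‖ := by
    intro n m
    have hfront : ∀ μ ∈ Metric.sphere (0:ℂ) rr,
        ‖gg n μ - gg m μ‖ ≤ Cb * ‖xs n - xs m‖ := by
      intro μ hμ
      have hμd : μ ∈ Metric.ball (0:ℂ) d := by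
        rw [Metric.mem_sphere, dist_zero_right] at hμ
        rw [Metric.mem_ball, dist_zero_right, hμ]
        exact hrd
      have hμG : μ ∉ G := hsphere_sub μ hμ
      have hwM : gg n μ - gg m μ ∈ M := M.sub_mem (hgM n μ hμd) (hgM m μ hμd)
      have hvM : xs n - xs m ∈ M := M.sub_mem (hxsM n) (hxsM m)
      have hSw : (S - μ • (1 : M →L[ℂ] M)) ⟨gg n μ - gg m μ, hwM⟩ = ⟨xs n - xs m, hvM⟩ := by
        apply Subtype.ext
        show T (gg n μ - gg m μ) - μ • (gg n μ - gg m μ) = xs n - xs m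
        rw [map_sub, smul_sub,
          show T (gg n μ) - T (gg m μ) - (μ • gg n μ - μ • gg m μ)
            = (T (gg n μ) - μ • gg n μ) - (T (gg m μ) - μ • gg m μ) by abel,
          hgeq n μ hμd, hgeq m μ hμd]
      have hw_eq : (⟨gg n μ - gg m μ, hwM⟩ : M)
          = Ring.inverse (S - μ • (1 : M →L[ℂ] M)) ⟨xs n - xs m, hvM⟩ := by
        rw [← hSw, ← ContinuousLinearMap.mul_apply,
          Ring.inverse_mul_cancel _ (hunit μ hμG), ContinuousLinearMap.one_apply]
      calc ‖gg n μ - gg m μ‖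
          = ‖(⟨gg n μ - gg m μ, hwM⟩ : M)‖ := rfl
        _ = ‖Ring.inverse (S - μ • (1 : M →L[ℂ] M)) (⟨xs n - xs m, hvM⟩ : M)‖ := by
            rw [hw_eq]
        _ ≤ ‖Ring.inverse (S - μ • (1 : M →L[ℂ] M))‖ * ‖(⟨xs n - xs m, hvM⟩ : M)‖ :=
            ContinuousLinearMap.le_opNorm _ _
        _ ≤ Cb * ‖xs n - xs m‖ := by
            have h1' := hCb' μ hμ
            have h2' : ‖(⟨xs n - xs m, hvM⟩ : M)‖ = ‖xs n - xs m‖ := rfl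
            rw [h2']
            exact mul_le_mul_of_nonneg_right h1' (norm_nonneg _)
    intro μ hμ
    have hdiffcl : DiffContOnCl ℂ (fun μ => gg n μ - gg m μ) (Metric.ball 0 rr) := by
      apply DifferentiableOn.diffContOnCl
      apply ((hgdiff n).sub (hgdiff m)).mono
      rw [closure_ball (0:ℂ) hrrpos.ne']
      exact Metric.closedBall_subset_ball hrd
    have hmm := Complex.norm_le_of_forall_mem_frontier_norm_le Metric.isBounded_ball hdiffcl
      (fun z hz => by
        rw [frontier_ball (0:ℂ) hrrpos.ne'] at hz
        exact hfront z hz)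
      (by rw [closure_ball (0:ℂ) hrrpos.ne']; exact hμ)
    exact hmm
  have hxscauchy : CauchySeq xs := hxlim.cauchySeq
  have hCb0 : 0 ≤ Cb := by
    have h1' := hCb' (rr : ℂ) (by
      simp [Metric.mem_sphere, Complex.dist_eq, Complex.norm_real, abs_of_pos hrrpos])
    exact le_trans (norm_nonneg _) h1'
  have hgcauchy : ∀ μ ∈ Metric.closedBall (0:ℂ) rr, CauchySeq (fun n => gg n μ) := by
    intro μ hμ
    rw [Metric.cauchySeq_iff]
    intro ε hε
    obtain ⟨N, hN⟩ := Metric.cauchySeq_iff.mp hxscauchy (ε / (Cb+1)) (by positivity)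
    refine ⟨N, fun m hm n hn => ?_⟩
    have hd' := hN m hm n hn
    rw [dist_eq_norm] at hd' ⊢
    have hlt1 : Cb / (Cb+1) < 1 := (div_lt_one (by positivity)).mpr (by linarith)
    calc ‖gg m μ - gg n μ‖ ≤ Cb * ‖xs m - xs n‖ := hbound m n μ hμ
      _ ≤ Cb * (ε / (Cb+1)) := mul_le_mul_of_nonneg_left hd'.le hCb0
      _ = (Cb / (Cb+1)) * ε := by ring
      _ < 1 * ε := mul_lt_mul_of_pos_right hlt1 hε
      _ = ε := one_mul ε
  have hglim : ∀ μ ∈ Metric.closedBall (0:ℂ) rr,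
      ∃ y : X, Tendsto (fun n => gg n μ) atTop (𝓝 y) :=
    fun μ hμ => cauchySeq_tendsto_of_complete (hgcauchy μ hμ)
  choose! gl hgl using hglim
  have hub : ∀ n, ∀ μ ∈ Metric.closedBall (0:ℂ) rr, ∀ ε > (0:ℝ),
      (∀ m ≥ n, Cb * ‖xs n - xs m‖ ≤ ε) → ‖gg n μ - gl μ‖ ≤ ε := by
    intro n μ hμ ε hε hsmall
    have htt : Tendsto (fun m => ‖gg n μ - gg m μ‖) atTop (𝓝 ‖gg n μ - gl μ‖) :=
      (tendsto_const_nhds.sub (hgl μ hμ)).norm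
    apply le_of_tendsto htt
    filter_upwards [eventually_ge_atTop n] with m hm
    exact le_trans (hbound n m μ hμ) (hsmall m hm)
  have hunif : TendstoUniformlyOn (fun n μ => gg n μ) gl atTop (Metric.closedBall 0 rr) := by
    rw [Metric.tendstoUniformlyOn_iff]
    intro ε hε
    obtain ⟨N, hN⟩ := Metric.cauchySeq_iff.mp hxscauchy (ε/2 / (Cb+1)) (by positivity)
    filter_upwards [eventually_ge_atTop N] with n hn
    intro μ hμ
    have hsmall : ∀ m ≥ n, Cb * ‖xs n - xs m‖ ≤ ε/2 := by
      intro m hm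
      have hd' := hN n hn m (le_trans hn hm)
      rw [dist_eq_norm] at hd'
      have hlt1 : Cb / (Cb+1) ≤ 1 := (div_le_one (by positivity)).mpr (by linarith)
      calc Cb * ‖xs n - xs m‖ ≤ Cb * (ε/2 / (Cb+1)) := mul_le_mul_of_nonneg_left hd'.le hCb0
        _ = (Cb / (Cb+1)) * (ε/2) := by ring
        _ ≤ 1 * (ε/2) := mul_le_mul_of_nonneg_right hlt1 (by positivity)
        _ = ε/2 := one_mul _
    have h1' := hub n μ hμ (ε/2) (by positivity) hsmall
    rw [dist_eq_norm, norm_sub_rev]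
    calc ‖gg n μ - gl μ‖ ≤ ε/2 := h1'
      _ < ε := by linarith
  have hballsub : Metric.ball (0:ℂ) rr ⊆ Metric.ball (0:ℂ) d := Metric.ball_subset_ball hrd.le
  have hgl_diff : DifferentiableOn ℂ gl (Metric.ball 0 rr) := by
    apply TendstoLocallyUniformlyOn.differentiableOn
      ((hunif.mono Metric.ball_subset_closedBall).tendstoLocallyUniformlyOn)
    · filter_upwards with n
      exact (hgdiff n).mono hballsub
    · exact Metric.isOpen_ball
  have hgl_eq : ∀ μ ∈ Metric.ball (0:ℂ) rr, T (gl μ) - μ • gl μ = x := by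
    intro μ hμ
    have hμc : μ ∈ Metric.closedBall (0:ℂ) rr := Metric.ball_subset_closedBall hμ
    have hμd : μ ∈ Metric.ball (0:ℂ) d := hballsub hμ
    have ht1 : Tendsto (fun n => T (gg n μ) - μ • gg n μ) atTop (𝓝 (T (gl μ) - μ • gl μ)) :=
      ((T.continuous.tendsto _).comp (hgl μ hμc)).sub ((hgl μ hμc).const_smul μ)
    have ht2 : Tendsto (fun n => T (gg n μ) - μ • gg n μ) atTop (𝓝 x) :=
      hxlim.congr (fun n => (hgeq n μ hμd).symm)
    exact tendsto_nhds_unique ht1 ht2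
  intro ν hν
  rcases hxG hν with hF' | h0'
  · exact hF'
  · exfalso
    rw [mem_singleton_iff] at h0'
    subst h0'
    exact StmtNine.locRes_iff.mpr ⟨Metric.ball 0 rr, Metric.isOpen_ball,
      Metric.mem_ball_self hrrpos, gl, hgl_diff, hgl_eq⟩ hν
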